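/- If a sequence (τ_n) of nonzero real numbers satisfies τ_{n+3}τ_n = τ_{n+2}² + τ_{n+1}² + J for all n, and N = (τ_2² + τ_1² + τ_0² + J)/(τ_2τ_1τ_0), then the sequence also satisfies the recurrence τ_{n+3} = N τ_{n+2} τ_{n+1} − τ_n for all n. -/

import Mathlib

theorem equivalent_recurrence (J : ℝ) (τ : ℕ → ℝ) (hnz : ∀ n, τ n ≠ 0)
    (hrec : ∀ n, τ (n + 3) * τ n = τ (n + 2) ^ 2 + τ (n + 1) ^ 2 + J)
    (N : ℝ) (hN : N = (τ 2 ^ 2 + τ 1 ^ 2 + τ 0 ^ 2 + J) / (τ 2 * τ 1 * τ 0)) :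
    ∀ n, τ (n + 3) = N * τ (n + 2) * τ (n + 1) - τ n := by
  have key : ∀ n, τ (n + 3) + τ n = N * τ (n + 2) * τ (n + 1) := by
    intro n
    induction n with
    | zero =>
      have h0 := hrec 0
      have h2 : τ 2 * τ 1 * τ 0 ≠ 0 := by
        exact mul_ne_zero (mul_ne_zero (hnz 2) (hnz 1)) (hnz 0)
      norm_num at h0
      rw [hN, zero_add]
      have := hnz 0
      have := hnz 1
      have := hnz 2
      field_simp
      linear_combination h0
    | succ n ih =>
      have h1 := hrec n
      have h2 := hrec (n + 1)
      have hc : τ (n + 1) ≠ 0 := hnz (n + 1)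
      have : (τ (n + 1 + 3) + τ (n + 1)) * τ (n + 1)
          = (N * τ (n + 1 + 2) * τ (n + 1 + 1)) * τ (n + 1) := by
        have e2 : n + 1 + 3 = n + 4 := by ring
        have e3 : n + 1 + 2 = n + 3 := by ring
        have e4 : n + 1 + 1 = n + 2 := by ring
        rw [e2, e3, e4]
        have h2' : τ (n + 4) * τ (n + 1) = τ (n + 3) ^ 2 + τ (n + 2) ^ 2 + J := by
          have : n + 1 + 3 = n + 4 := by ring
          simpa [this] using h2
        linear_combination h2' - h1 + τ (n + 3) * ih
      exact mul_right_cancel₀ hc this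
  intro n
  have := key n
  linarith
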